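/- Let k ≥ 4 be an integer and let a_1 < a_2 < ⋯ < a_{3k} be positive integers, each of which is a product of two distinct primes. Define a simple graph G whose vertices are the primes dividing a_1 a_2 ⋯ a_{3k}, with two distinct primes p, q adjacent if and only if p·q = a_h for some 1 ≤ h ≤ 3k. If G contains no cycle of length ℓ for any 3 ≤ ℓ ≤ k, then the product a_1 a_2 ⋯ a_{3k} is not a perfect cube (i.e., there is no positive integer x with a_1 a_2 ⋯ a_{3k} = x³). -/

import Mathlib

open Finset Filter


open Finset SimpleGraph
open scoped Classical

section Aux

variable {V : Type*} [DecidableEq V] {G : SimpleGraph V}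

lemma edge_first {u c z : V} (Q : G.Walk u c) (hQ : Q.IsPath) (h : s(u,z) ∈ Q.edges) :
    ∃ (h' : G.Adj u z) (Q' : G.Walk z c), Q = SimpleGraph.Walk.cons h' Q' := by
  cases Q with
  | nil => simp at h
  | cons h' Q' =>
    rename_i b
    rw [SimpleGraph.Walk.edges_cons, List.mem_cons] at h
    rcases h with h | h
    · rw [Sym2.eq_iff] at h
      rcases h with ⟨-, rfl⟩ | ⟨rfl, rfl⟩
      · exact ⟨h', Q', rfl⟩
      · exact absurd rfl h'.ne
    · exfalso
      rw [SimpleGraph.Walk.cons_isPath_iff] at hQ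
      exact hQ.2 (Q'.fst_mem_support_of_mem_edges h)

lemma cycle_of_two_paths {u w : V} (p : G.Walk u w) : ∀ (q : G.Walk u w),
    p.IsPath → q.IsPath → p ≠ q →
    ∃ (x : V) (c : G.Walk x x), c.IsCycle ∧ c.length ≤ p.length + q.length := by
  induction p with
  | nil =>
    intro q _ hq hne
    exact absurd (SimpleGraph.Walk.isPath_iff_eq_nil.mp hq).symm hne
  | @cons u x w h p' ih =>
    intro q hp hq hne
    by_cases hx : x ∈ q.support
    · -- q is not nil
      cases q with
      | nil =>
        exact absurd (SimpleGraph.Walk.isPath_iff_eq_nil.mp hp) (by simp)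
      | @cons _ y _ h' q' =>
        by_cases hxy : x = y
        · subst hxy
          have hne' : p' ≠ q' := by rintro rfl; exact hne rfl
          obtain ⟨z, c, hc, hlen⟩ := ih q' hp.of_cons hq.of_cons hne'
          exact ⟨z, c, hc, by simp only [SimpleGraph.Walk.length_cons]; omega⟩
        · -- direct cycle via takeUntil
          have hedge : s(u, x) ∉ ((SimpleGraph.Walk.cons h' q').takeUntil x hx).edges := by
            intro hmem
            have hmem' : s(u,x) ∈ (SimpleGraph.Walk.cons h' q').edges :=
              (SimpleGraph.Walk.cons h' q').edges_takeUntil_subset hx hmem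
            obtain ⟨h'', Q2, heq⟩ := edge_first _ hq hmem'
            have : x = y := by
              have := congrArg (fun (r : G.Walk u w) => r.getVert 1) heq
              simpa using this.symm
            exact hxy this
          refine ⟨u, SimpleGraph.Walk.cons h ((SimpleGraph.Walk.cons h' q').takeUntil x hx).reverse,
            ?_, ?_⟩
          · refine (SimpleGraph.Walk.cons_isCycle_iff _ _).mpr ⟨(hq.takeUntil hx).reverse, ?_⟩
            rw [SimpleGraph.Walk.edges_reverse, List.mem_reverse]
            exact hedge
          · have := (SimpleGraph.Walk.cons h' q').length_takeUntil_le hx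
            simp only [SimpleGraph.Walk.length_cons, SimpleGraph.Walk.length_reverse] at *
            omega
    · -- extend q backwards
      have hq'' : (SimpleGraph.Walk.cons h.symm q).IsPath :=
        (SimpleGraph.Walk.cons_isPath_iff _ _).mpr ⟨hq, hx⟩
      have hne' : p' ≠ SimpleGraph.Walk.cons h.symm q := by
        intro heq
        rw [SimpleGraph.Walk.cons_isPath_iff] at hp
        apply hp.2
        rw [heq, SimpleGraph.Walk.support_cons]
        exact List.mem_cons_of_mem _ q.start_mem_support
      obtain ⟨z, c, hc, hlen⟩ := ih _ hp.of_cons hq'' hne'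
      exact ⟨z, c, hc, by simp only [SimpleGraph.Walk.length_cons] at hlen ⊢; omega⟩

open scoped Classical

noncomputable def Dset (G : SimpleGraph V) (S : Finset V) (v : V) (l : ℕ) : Finset V :=
  S.filter (fun u => ∃ P : G.Walk u v, P.IsPath ∧ P.length = l)

lemma mem_Dset {S : Finset V} {v u : V} {l : ℕ} :
    u ∈ Dset G S v l ↔ u ∈ S ∧ ∃ P : G.Walk u v, P.IsPath ∧ P.length = l := by
  simp [Dset]

variable {S : Finset V} {k : ℕ} {v : V}

lemma Dset_disj (NC : ∀ (x : V) (c : G.Walk x x), c.IsCycle → c.length ≤ k → False)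
    {l1 l2 : ℕ} (h12 : l1 ≠ l2) (hlk : l1 + l2 ≤ k) {u : V}
    (h1 : u ∈ Dset G S v l1) (h2 : u ∈ Dset G S v l2) : False := by
  obtain ⟨-, P1, hP1, hl1⟩ := mem_Dset.mp h1
  obtain ⟨-, P2, hP2, hl2⟩ := mem_Dset.mp h2
  have hne : P1 ≠ P2 := by
    intro hEq; rw [hEq] at hl1; exact h12 (hl1.symm.trans hl2)
  obtain ⟨x, c, hc, hlen⟩ := cycle_of_two_paths P1 P2 hP1 hP2 hne
  exact NC x c hc (by omega)

lemma start_mem_S (hadj : ∀ u w : V, G.Adj u w → u ∈ S) {a b : V} (Q : G.Walk a b)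
    (hb : b ∈ S) : a ∈ S := by
  cases Q with
  | nil => exact hb
  | cons h _ => exact hadj _ _ h

lemma support_mem_Dset (hv : v ∈ S) (hadj : ∀ u w : V, G.Adj u w → u ∈ S)
    {u w : V} (P : G.Walk u v) (hP : P.IsPath) (hw : w ∈ P.support) :
    ∃ j ≤ P.length, w ∈ Dset G S v j := by
  refine ⟨(P.dropUntil w hw).length, P.length_dropUntil_le hw, ?_⟩
  exact mem_Dset.mpr ⟨start_mem_S hadj (P.dropUntil w hw) hv, P.dropUntil w hw, hP.dropUntil hw, rfl⟩

lemma claim1 (NC : ∀ (x : V) (c : G.Walk x x), c.IsCycle → c.length ≤ k → False)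
    (hadj : ∀ u w : V, G.Adj u w → u ∈ S)
    {l : ℕ} (hlk : l + 1 ≤ k) {u : V}
    (P : G.Walk u v) (hP : P.IsPath) (hPl : P.length = l) :
    S.filter (G.Adj u) ⊆ insert (P.getVert 1) (Dset G S v (l+1)) := by
  intro c hc
  obtain ⟨hcS, huc⟩ := Finset.mem_filter.mp hc
  by_cases hcsup : c ∈ P.support
  · -- c on the path: either c is the second vertex, or there is a short cycle
    by_cases hQe : s(u, c) ∈ (P.takeUntil c hcsup).edges
    · have hmem' : s(u, c) ∈ P.edges := P.edges_takeUntil_subset hcsup hQe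
      obtain ⟨h'', P2, heq⟩ := edge_first P hP hmem'
      refine Finset.mem_insert.mpr (Or.inl ?_)
      have := congrArg (fun (r : G.Walk u v) => r.getVert 1) heq
      simpa using this.symm
    · exfalso
      have hcyc : (SimpleGraph.Walk.cons huc.symm (P.takeUntil c hcsup)).IsCycle := by
        refine (SimpleGraph.Walk.cons_isCycle_iff _ _).mpr ⟨hP.takeUntil hcsup, ?_⟩
        rw [Sym2.eq_swap] at hQe; exact hQe
      refine NC c _ hcyc ?_
      have := P.length_takeUntil_le hcsup
      simp only [SimpleGraph.Walk.length_cons]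
      omega
  · refine Finset.mem_insert.mpr (Or.inr (mem_Dset.mpr ⟨hcS, SimpleGraph.Walk.cons huc.symm P,
      (SimpleGraph.Walk.cons_isPath_iff _ _).mpr ⟨hP, hcsup⟩, ?_⟩))
    simp [hPl]

lemma doubling (NC : ∀ (x : V) (c : G.Walk x x), c.IsCycle → c.length ≤ k → False)
    (hadj : ∀ u w : V, G.Adj u w → u ∈ S) (hv : v ∈ S)
    (hdeg : ∀ u ∈ S, 3 ≤ (S.filter (G.Adj u)).card)
    {l : ℕ} (h2l : 2 * (l + 1) ≤ k) :
    2 * (Dset G S v l).card ≤ (Dset G S v (l+1)).card := by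
  set D1 := Dset G S v (l+1) with hD1
  have h1 : ∀ u ∈ Dset G S v l, 2 ≤ (D1.filter (fun c => G.Adj u c)).card := by
    intro u hu
    obtain ⟨huS, P, hP, hPl⟩ := mem_Dset.mp hu
    have hsub : (S.filter (G.Adj u)).erase (P.getVert 1) ⊆ D1.filter (fun c => G.Adj u c) := by
      intro c hc
      obtain ⟨hne, hc⟩ := Finset.mem_erase.mp hc
      have := claim1 NC hadj (by omega) P hP hPl hc
      rcases Finset.mem_insert.mp this with h | h
      · exact absurd h hne
      · exact Finset.mem_filter.mpr ⟨h, (Finset.mem_filter.mp hc).2⟩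
    have h3 : 3 ≤ (S.filter (G.Adj u)).card := hdeg u huS
    have := Finset.pred_card_le_card_erase (s := S.filter (G.Adj u)) (a := P.getVert 1)
    have := Finset.card_le_card hsub
    omega
  have h2 : ∀ u1 ∈ Dset G S v l, ∀ u2 ∈ Dset G S v l, u1 ≠ u2 →
      Disjoint (D1.filter (fun c => G.Adj u1 c)) (D1.filter (fun c => G.Adj u2 c)) := by
    intro u1 hu1 u2 hu2 hne12
    rw [Finset.disjoint_left]
    intro c hc1 hc2
    obtain ⟨hcD, h1c⟩ := Finset.mem_filter.mp hc1
    obtain ⟨-, h2c⟩ := Finset.mem_filter.mp hc2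
    obtain ⟨-, P1, hP1, hl1⟩ := mem_Dset.mp hu1
    obtain ⟨-, P2, hP2, hl2⟩ := mem_Dset.mp hu2
    have hc1sup : c ∉ P1.support := by
      intro hsup
      obtain ⟨j, hj, hcj⟩ := support_mem_Dset hv hadj P1 hP1 hsup
      exact Dset_disj NC (by omega) (by omega) hcj hcD
    have hc2sup : c ∉ P2.support := by
      intro hsup
      obtain ⟨j, hj, hcj⟩ := support_mem_Dset hv hadj P2 hP2 hsup
      exact Dset_disj NC (by omega) (by omega) hcj hcD
    have hW1 : (SimpleGraph.Walk.cons h1c.symm P1).IsPath :=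
      (SimpleGraph.Walk.cons_isPath_iff _ _).mpr ⟨hP1, hc1sup⟩
    have hW2 : (SimpleGraph.Walk.cons h2c.symm P2).IsPath :=
      (SimpleGraph.Walk.cons_isPath_iff _ _).mpr ⟨hP2, hc2sup⟩
    have hWne : SimpleGraph.Walk.cons h1c.symm P1 ≠ SimpleGraph.Walk.cons h2c.symm P2 := by
      intro hEq
      have := congrArg (fun (r : G.Walk c v) => r.getVert 1) hEq
      simp at this
      exact hne12 this
    obtain ⟨x, cyc, hcyc, hlen⟩ := cycle_of_two_paths _ _ hW1 hW2 hWne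
    refine NC x cyc hcyc ?_
    simp only [SimpleGraph.Walk.length_cons] at hlen
    omega
  calc 2 * (Dset G S v l).card = ∑ u ∈ Dset G S v l, 2 := by
        rw [Finset.sum_const, smul_eq_mul, mul_comm]
    _ ≤ ∑ u ∈ Dset G S v l, (D1.filter (fun c => G.Adj u c)).card :=
        Finset.sum_le_sum h1
    _ = ((Dset G S v l).biUnion (fun u => D1.filter (fun c => G.Adj u c))).card :=
        (Finset.card_biUnion h2).symm
    _ ≤ D1.card := Finset.card_le_card (by
        intro c hc
        obtain ⟨u, -, hc⟩ := Finset.mem_biUnion.mp hc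
        exact (Finset.mem_filter.mp hc).1)

lemma growth (NC : ∀ (x : V) (c : G.Walk x x), c.IsCycle → c.length ≤ k → False)
    (hadj : ∀ u w : V, G.Adj u w → u ∈ S) (hv : v ∈ S)
    (hdeg : ∀ u ∈ S, 3 ≤ (S.filter (G.Adj u)).card)
    {l : ℕ} (hl1 : 1 ≤ l) (h2l : 2 * l ≤ k) :
    3 * 2 ^ (l - 1) ≤ (Dset G S v l).card := by
  induction l, hl1 using Nat.le_induction with
  | base =>
    have hsub : S.filter (G.Adj v) ⊆ Dset G S v 1 := by
      intro c hc
      obtain ⟨hcS, hvc⟩ := Finset.mem_filter.mp hc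
      refine mem_Dset.mpr ⟨hcS, SimpleGraph.Walk.cons hvc.symm SimpleGraph.Walk.nil, ?_, rfl⟩
      refine (SimpleGraph.Walk.cons_isPath_iff _ _).mpr ⟨SimpleGraph.Walk.IsPath.nil, ?_⟩
      simp [hvc.ne']
    have := Finset.card_le_card hsub
    have := hdeg v hv
    simpa using by omega
  | succ l hl1 ih =>
    have h2l' : 2 * l ≤ k := by omega
    have hd := doubling NC hadj hv hdeg (l := l) h2l
    have := ih h2l'
    have hpow : 3 * 2 ^ (l + 1 - 1) = 2 * (3 * 2 ^ (l - 1)) := by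
      have h : l + 1 - 1 = (l - 1) + 1 := by omega
      rw [h, pow_succ]
      ring
    omega

lemma sum_le_card (NC : ∀ (x : V) (c : G.Walk x x), c.IsCycle → c.length ≤ k → False)
    {r : ℕ} (h2r : 2 * r ≤ k) :
    ∑ l ∈ Finset.range (r+1), (Dset G S v l).card ≤ S.card ∧
    ((Finset.range (r+1)).biUnion (Dset G S v)).card
      = ∑ l ∈ Finset.range (r+1), (Dset G S v l).card := by
  have hdisj : ∀ l1 ∈ Finset.range (r+1), ∀ l2 ∈ Finset.range (r+1), l1 ≠ l2 →
      Disjoint (Dset G S v l1) (Dset G S v l2) := by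
    intro l1 h1 l2 h2 hne
    rw [Finset.mem_range] at h1 h2
    rw [Finset.disjoint_left]
    intro u hu1 hu2
    exact Dset_disj NC hne (by omega) hu1 hu2
  have hcard := Finset.card_biUnion hdisj
  constructor
  · rw [← hcard]
    refine Finset.card_le_card ?_
    intro u hu
    obtain ⟨l, -, hu⟩ := Finset.mem_biUnion.mp hu
    exact (mem_Dset.mp hu).1
  · exact hcard

lemma geom2 (n : ℕ) : ∑ i ∈ Finset.range n, 3 * 2 ^ i = 3 * (2 ^ n - 1) := by
  induction n with
  | zero => simp
  | succ n ih =>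
    rw [Finset.sum_range_succ, ih]
    have : 1 ≤ 2 ^ n := Nat.one_le_two_pow
    have : 2 ^ (n + 1) = 2 * 2 ^ n := by rw [pow_succ]; ring
    omega

lemma arith_pow (r : ℕ) (hr : 3 ≤ r) : 4 * r + 4 < 3 * 2 ^ r := by
  induction r, hr using Nat.le_induction with
  | base => norm_num
  | succ r hr ih =>
    have : 2 ^ (r + 1) = 2 * 2 ^ r := by rw [pow_succ]; ring
    have : 4 ≤ 3 * 2 ^ r := by
      have : 2 ≤ 2 ^ r := by
        calc 2 = 2 ^ 1 := rfl
        _ ≤ 2 ^ r := Nat.pow_le_pow_right (by norm_num) (by omega)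
      omega
    omega

lemma graph_contra (G : SimpleGraph V) (S : Finset V) (k : ℕ) (hk : 4 ≤ k)
    (hadj : ∀ u w : V, G.Adj u w → u ∈ S)
    (hdeg : ∀ u ∈ S, 3 ≤ (S.filter (G.Adj u)).card)
    (hScard : S.card ≤ 2 * k)
    (hSne : S.Nonempty)
    (NC : ∀ (x : V) (c : G.Walk x x), c.IsCycle → c.length ≤ k → False) : False := by
  obtain ⟨v, hv⟩ := hSne
  have hvD0 : v ∈ Dset G S v 0 := mem_Dset.mpr ⟨hv, SimpleGraph.Walk.nil, by simp, rfl⟩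
  -- general sum bound for any r with 2r ≤ k
  have key : ∀ r : ℕ, 2 * r ≤ k →
      (Dset G S v 0).card + ∑ i ∈ Finset.range r, (Dset G S v (i+1)).card ≤ 2 * k := by
    intro r h2r
    have hsum := (sum_le_card (G := G) (S := S) (v := v) NC h2r).1
    calc (Dset G S v 0).card + ∑ i ∈ Finset.range r, (Dset G S v (i+1)).card
        = ∑ l ∈ Finset.range (r+1), (Dset G S v l).card := by
          rw [Finset.sum_range_succ']; omega
      _ ≤ S.card := hsum
      _ ≤ 2 * k := hScard
  have hD0card : 1 ≤ (Dset G S v 0).card := Finset.card_pos.mpr ⟨v, hvD0⟩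
  have hDi : ∀ i : ℕ, 2 * (i + 1) ≤ k → 3 * 2 ^ i ≤ (Dset G S v (i+1)).card := by
    intro i h2i
    have := growth NC hadj hv hdeg (l := i+1) (by omega) h2i
    simpa using this
  by_cases hk5 : k = 5
  · -- special case k = 5
    subst hk5
    have hd1 : 3 ≤ (Dset G S v 1).card := by simpa using hDi 0 (by norm_num)
    have hd2 : 2 * (Dset G S v 1).card ≤ (Dset G S v 2).card :=
      doubling NC hadj hv hdeg (l := 1) (by norm_num)
    have hsum := key 2 (by norm_num)
    rw [Finset.sum_range_succ, Finset.sum_range_succ, Finset.sum_range_zero] at hsum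
    have hD0eq : Dset G S v 0 = {v} := by
      ext u
      simp only [Finset.mem_singleton]
      constructor
      · intro hu
        obtain ⟨-, P, -, hP0⟩ := mem_Dset.mp hu
        exact SimpleGraph.Walk.eq_of_length_eq_zero hP0
      · rintro rfl; exact hvD0
    have hd1' : (Dset G S v 1).card = 3 := by
      rw [hD0eq] at hsum; simp at hsum; omega
    have hd2' : (Dset G S v 2).card = 6 := by
      rw [hD0eq] at hsum; simp at hsum; omega
    -- S equals the union of the three spheres
    have hbi := sum_le_card (G := G) (S := S) (v := v) (r := 2) NC (by norm_num)
    have hUcard : ((Finset.range 3).biUnion (Dset G S v)).card = 10 := by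
      rw [hbi.2, Finset.sum_range_succ, Finset.sum_range_succ, Finset.sum_range_succ,
        Finset.sum_range_zero, hD0eq, hd1', hd2']
      simp
    have hUsub : (Finset.range 3).biUnion (Dset G S v) ⊆ S := by
      intro u hu
      obtain ⟨l, -, hu⟩ := Finset.mem_biUnion.mp hu
      exact (mem_Dset.mp hu).1
    have hSeq : (Finset.range 3).biUnion (Dset G S v) = S :=
      Finset.eq_of_subset_of_card_le hUsub (by omega)
    have hD3 : Dset G S v 3 = ∅ := by
      rw [Finset.eq_empty_iff_forall_notMem]
      intro x hx
      have hxS : x ∈ S := (mem_Dset.mp hx).1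
      rw [← hSeq] at hxS
      obtain ⟨l, hl, hxl⟩ := Finset.mem_biUnion.mp hxS
      rw [Finset.mem_range] at hl
      exact Dset_disj NC (l1 := l) (l2 := 3) (by omega) (by omega) hxl hx
    have hD2ne : (Dset G S v 2).Nonempty := Finset.card_pos.mp (by omega)
    obtain ⟨u, hu⟩ := hD2ne
    obtain ⟨huS, P, hP, hPl⟩ := mem_Dset.mp hu
    have hsub := claim1 NC hadj (l := 2) (by norm_num) P hP hPl
    rw [hD3] at hsub
    have : (S.filter (G.Adj u)).card ≤ 1 := by
      calc (S.filter (G.Adj u)).card ≤ (insert (P.getVert 1) (∅ : Finset V)).card :=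
            Finset.card_le_card hsub
        _ ≤ 1 := Finset.card_insert_le _ _ |>.trans (by simp)
    have := hdeg u huS
    omega
  · -- general case
    set r := k / 2 with hr
    have h2r : 2 * r ≤ k := by omega
    have hsum := key r h2r
    have hgeo : ∑ i ∈ Finset.range r, 3 * 2 ^ i ≤
        ∑ i ∈ Finset.range r, (Dset G S v (i+1)).card := by
      refine Finset.sum_le_sum ?_
      intro i hi
      rw [Finset.mem_range] at hi
      exact hDi i (by omega)
    rw [geom2] at hgeo
    have harith : 2 * k < 1 + 3 * (2 ^ r - 1) := by
      rcases Nat.lt_or_ge k 6 with h6 | h6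
      · have hk4 : k = 4 := by omega
        subst hk4
        norm_num [hr]
      · have hr3 : 3 ≤ r := by omega
        have := arith_pow r hr3
        have h1 : 1 ≤ 2 ^ r := Nat.one_le_two_pow
        omega
    omega

end Aux

theorem stmt_17 (k : ℕ) (hk : 4 ≤ k) (a : Fin (3 * k) → ℕ) (hmono : StrictMono a)
    (hsp : ∀ i, ∃ p q : ℕ, p.Prime ∧ q.Prime ∧ p ≠ q ∧ a i = p * q)
    (G : SimpleGraph ℕ)
    (hG : ∀ p q : ℕ, G.Adj p q ↔
      p.Prime ∧ q.Prime ∧ p ≠ q ∧ ∃ h : Fin (3 * k), p * q = a h)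
    (hcycfree : ¬ ∃ (v : ℕ) (w : G.Walk v v), w.IsCycle ∧ 3 ≤ w.length ∧ w.length ≤ k) :
    ¬ ∃ x : ℕ, 0 < x ∧ (∏ i, a i) = x ^ 3 := by
  rintro ⟨x, hxpos, hprod⟩
  have ha0 : ∀ i, a i ≠ 0 := by
    intro i
    obtain ⟨p, q, hp, hq, -, hai⟩ := hsp i
    rw [hai]
    exact Nat.mul_ne_zero hp.ne_zero hq.ne_zero
  have hN0 : (∏ i, a i) ≠ 0 := Finset.prod_ne_zero_iff.mpr (fun i _ => ha0 i)
  set S : Finset ℕ := (∏ i, a i).primeFactors with hS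
  set d : ℕ → ℕ :=
    fun p => ((Finset.univ : Finset (Fin (3*k))).filter (fun i => p ∣ a i)).card with hd
  -- factorization of the product counts divisibility
  have hfact : ∀ p : ℕ, p.Prime → (∏ i, a i).factorization p = d p := by
    intro p hp
    rw [Nat.factorization_prod (fun i _ => ha0 i), Finsupp.finset_sum_apply, hd]
    simp only [Finset.card_filter]
    refine Finset.sum_congr rfl ?_
    intro i _
    obtain ⟨pi, qi, hpi, hqi, hne, hai⟩ := hsp i
    rw [hai, Nat.factorization_mul hpi.ne_zero hqi.ne_zero, Finsupp.add_apply,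
      hpi.factorization, hqi.factorization, Finsupp.single_apply, Finsupp.single_apply]
    by_cases h1 : pi = p
    · subst h1
      have h2 : ¬ qi = pi := fun h => hne h.symm
      simp [h2, dvd_mul_right]
    · by_cases h2 : qi = p
      · subst h2
        simp [h1, dvd_mul_left]
      · have hnd : ¬ p ∣ pi * qi := by
          intro hdvd
          rcases (Nat.Prime.dvd_mul hp).mp hdvd with h | h
          · exact h1 ((Nat.prime_dvd_prime_iff_eq hp hpi).mp h).symm
          · exact h2 ((Nat.prime_dvd_prime_iff_eq hp hqi).mp h).symm
        simp [h1, h2, hnd]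
  have h3dvd : ∀ p : ℕ, p.Prime → 3 ∣ d p := by
    intro p hp
    have h := hfact p hp
    rw [hprod, Nat.factorization_pow, Finsupp.smul_apply, smul_eq_mul] at h
    exact ⟨x.factorization p, h.symm⟩
  have hdS : ∀ p ∈ S, 3 ≤ d p := by
    intro p hpS
    have hp := Nat.prime_of_mem_primeFactors hpS
    have hne : d p ≠ 0 := by
      intro h0
      have := hfact p hp
      rw [h0] at this
      rw [hS, ← Nat.support_factorization, Finsupp.mem_support_iff] at hpS
      exact hpS this
    rcases h3dvd p hp with ⟨c, hc⟩
    omega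
  -- adjacency implies membership in S
  have hadj : ∀ u w : ℕ, G.Adj u w → u ∈ S := by
    intro u w huw
    rw [hG] at huw
    obtain ⟨hu, hw, hne, i, hiw⟩ := huw
    refine Nat.mem_primeFactors.mpr ⟨hu, ?_, hN0⟩
    exact dvd_trans ⟨w, hiw.symm⟩ (Finset.dvd_prod_of_mem a (Finset.mem_univ i))
  -- the "other prime" decomposition
  have hother : ∀ (p : ℕ), p.Prime → ∀ i, p ∣ a i →
      (a i / p).Prime ∧ p ≠ a i / p ∧ a i = p * (a i / p) := by
    intro p hp i hdvd
    obtain ⟨pi, qi, hpi, hqi, hne, hai⟩ := hsp i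
    rw [hai] at hdvd ⊢
    rcases (Nat.Prime.dvd_mul hp).mp hdvd with h | h
    · have : p = pi := (Nat.prime_dvd_prime_iff_eq hp hpi).mp h
      subst this
      rw [Nat.mul_div_cancel_left qi hp.pos]
      exact ⟨hqi, hne, rfl⟩
    · have : p = qi := (Nat.prime_dvd_prime_iff_eq hp hqi).mp h
      subst this
      rw [mul_comm pi p, Nat.mul_div_cancel_left pi hp.pos]
      exact ⟨hpi, fun hEq => hne (hEq.symm), rfl⟩
  -- degree bound
  have hdeg : ∀ p ∈ S, 3 ≤ (S.filter (G.Adj p)).card := by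
    intro p hpS
    have hp := Nat.prime_of_mem_primeFactors hpS
    have hinj := Finset.card_le_card_of_injOn (s := Finset.univ.filter (fun i => p ∣ a i))
      (t := S.filter (G.Adj p)) (fun i => a i / p) ?_ ?_
    · exact le_trans (hdS p hpS) hinj
    · intro i hi
      have hdvd : p ∣ a i := (Finset.mem_filter.mp hi).2
      obtain ⟨hq, hpq, hai⟩ := hother p hp i hdvd
      refine Finset.mem_filter.mpr ⟨?_, ?_⟩
      · refine Nat.mem_primeFactors.mpr ⟨hq, ?_, hN0⟩
        exact dvd_trans ⟨p, by rw [hai]; ring⟩ (Finset.dvd_prod_of_mem a (Finset.mem_univ i))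
      · exact (hG p (a i / p)).mpr ⟨hp, hq, hpq, i, hai.symm⟩
    · intro i hi j hj hij
      simp only [Finset.coe_filter, Set.mem_setOf_eq] at hi hj
      obtain ⟨-, -, hai⟩ := hother p hp i hi.2
      obtain ⟨-, -, haj⟩ := hother p hp j hj.2
      have hij' : a i / p = a j / p := hij
      apply hmono.injective
      rw [hai, haj, hij']
  -- double counting : sum of d over S is 6k
  have hsum : ∑ p ∈ S, d p = 6 * k := by
    have hstep : ∀ p, d p = ∑ i : Fin (3*k), if p ∣ a i then 1 else 0 := by
      intro p; rw [hd]; exact Finset.card_filter _ _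
    calc ∑ p ∈ S, d p = ∑ p ∈ S, ∑ i : Fin (3*k), if p ∣ a i then 1 else 0 :=
          Finset.sum_congr rfl (fun p _ => hstep p)
      _ = ∑ i : Fin (3*k), ∑ p ∈ S, if p ∣ a i then 1 else 0 := Finset.sum_comm
      _ = ∑ i : Fin (3*k), (S.filter (fun p => p ∣ a i)).card := by
          refine Finset.sum_congr rfl ?_
          intro i _
          rw [Finset.card_filter]
      _ = ∑ i : Fin (3*k), 2 := by
          refine Finset.sum_congr rfl ?_
          intro i _
          have hfeq : S.filter (fun p => p ∣ a i) = (a i).primeFactors := by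
            ext p
            simp only [Finset.mem_filter, Nat.mem_primeFactors, hS]
            constructor
            · rintro ⟨⟨hp, -, -⟩, hdvd⟩
              exact ⟨hp, hdvd, ha0 i⟩
            · rintro ⟨hp, hdvd, -⟩
              exact ⟨⟨hp, dvd_trans hdvd (Finset.dvd_prod_of_mem a (Finset.mem_univ i)), hN0⟩,
                hdvd⟩
          rw [hfeq]
          obtain ⟨pi, qi, hpi, hqi, hne, hai⟩ := hsp i
          rw [hai, Nat.primeFactors_mul hpi.ne_zero hqi.ne_zero, hpi.primeFactors,
            hqi.primeFactors]
          rw [Finset.card_union_of_disjoint (by simpa using hne)]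
          simp
      _ = 6 * k := by
          rw [Finset.sum_const, smul_eq_mul, Finset.card_univ, Fintype.card_fin]
          ring
  have hScard : S.card ≤ 2 * k := by
    have h1 : 3 * S.card ≤ ∑ p ∈ S, d p := by
      calc 3 * S.card = ∑ p ∈ S, 3 := by rw [Finset.sum_const, smul_eq_mul, mul_comm]
        _ ≤ ∑ p ∈ S, d p := Finset.sum_le_sum hdS
    omega
  have hSne : S.Nonempty := by
    have h3k : 0 < 3 * k := by omega
    obtain ⟨p0, q0, hp0, hq0, -, hai⟩ := hsp ⟨0, h3k⟩
    refine ⟨p0, Nat.mem_primeFactors.mpr ⟨hp0, ?_, hN0⟩⟩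
    exact dvd_trans ⟨q0, hai⟩ (Finset.dvd_prod_of_mem a (Finset.mem_univ _))
  have NC : ∀ (y : ℕ) (c : G.Walk y y), c.IsCycle → c.length ≤ k → False := by
    intro y c hc hlen
    exact hcycfree ⟨y, c, hc, hc.three_le_length, hlen⟩
  exact graph_contra G S k hk hadj hdeg hScard hSne NC
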